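/- arXiv:1307.8093 — 2 statements merged into one kernel-verified Lean document; each statement's English description precedes it below -/
import Mathlib

section
/- For every formal power series φ ∈ z⁻¹ℂ[[z⁻¹]], the series (C_{id−1} − Id)φ, i.e. φ(z−1) − φ(z), lies in z⁻²ℂ[[z⁻¹]], and the map C_{id−1} − Id : z⁻¹ℂ[[z⁻¹]] → z⁻²ℂ[[z⁻¹]] is a bijection. -/
open Finset
open scoped Real

noncomputable section

/-- The formal derivative `d/dz` acting on `ℂ[[z⁻¹]]`: here a power series is an
element of `PowerSeries ℂ` whose `n`-th coefficient represents the coefficient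
of `z^{-n}`, and `d/dz (z^{-n}) = -n z^{-n-1}`. -/
def Dz (φ : PowerSeries ℂ) : PowerSeries ℂ :=
  PowerSeries.mk fun n => match n with
    | 0 => 0
    | m + 1 => -(m : ℂ) * PowerSeries.coeff m φ

/-- The composition operator `C_{id-1} : φ(z) ↦ φ(z-1)` on `ℂ[[z⁻¹]]`, defined by
the formal Taylor expansion `Σ_{k≥0} ((-1)^k / k!) (d/dz)^k φ`; since `(d/dz)^k`
raises the order in `z⁻¹` by at least `k`, the `n`-th coefficient only receives
contributions from `k ≤ n`. -/
def Cm1 (φ : PowerSeries ℂ) : PowerSeries ℂ :=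
  PowerSeries.mk fun n => ∑ k ∈ Finset.range (n + 1),
    ((-1 : ℂ) ^ k / (Nat.factorial k : ℂ)) * PowerSeries.coeff n (Dz^[k] φ)

/-- The composition operator `C_{id+b} : φ(z) ↦ φ(z+b(z))` on `ℂ[[z⁻¹]]`, defined
by the formal Taylor expansion `Σ_{k≥0} (b^k / k!) (d/dz)^k φ`; it is well defined
when `b ∈ z⁻¹ℂ[[z⁻¹]]`, in which case the `n`-th coefficient only receives
contributions from `k ≤ n`. -/
def Cb (b φ : PowerSeries ℂ) : PowerSeries ℂ :=
  PowerSeries.mk fun n => ∑ k ∈ Finset.range (n + 1),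
    ((Nat.factorial k : ℂ))⁻¹ * PowerSeries.coeff n (b ^ k * Dz^[k] φ)


lemma coeff_Dz_succ (φ : PowerSeries ℂ) (m : ℕ) :
    PowerSeries.coeff (m + 1) (Dz φ) = -(m : ℂ) * PowerSeries.coeff m φ := by
  simp [Dz]

lemma coeff_Dz_iter (φ : PowerSeries ℂ) (k n : ℕ) :
    PowerSeries.coeff (n + k) (Dz^[k] φ) =
      (-1) ^ k * (∏ j ∈ Finset.range k, ((n + j : ℕ) : ℂ)) * PowerSeries.coeff n φ := by
  induction k with
  | zero => simp
  | succ k ih =>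
    rw [Function.iterate_succ_apply', show n + (k + 1) = (n + k) + 1 by ring,
      coeff_Dz_succ, ih, Finset.prod_range_succ]
    push_cast
    ring

lemma prod_eq_desc (n k : ℕ) (hk : k ≤ n) :
    ∏ j ∈ Finset.range k, (n - k + j) = Nat.descFactorial (n - 1) k := by
  rw [Nat.descFactorial_eq_prod_range, ← Finset.prod_range_reflect (fun j => n - k + j) k]
  refine Finset.prod_congr rfl fun i hi => ?_
  have := Finset.mem_range.mp hi
  omega

lemma key (φ : PowerSeries ℂ) (n : ℕ) :
    PowerSeries.coeff n (Cm1 φ - φ) =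
      ∑ k ∈ Finset.Ico 1 (n + 1), ((n - 1).choose k : ℂ) * PowerSeries.coeff (n - k) φ := by
  have h : PowerSeries.coeff n (Cm1 φ) =
      ∑ k ∈ Finset.range (n + 1), ((n - 1).choose k : ℂ) * PowerSeries.coeff (n - k) φ := by
    rw [Cm1, PowerSeries.coeff_mk]
    refine Finset.sum_congr rfl fun k hk => ?_
    have hkn : k ≤ n := Nat.lt_succ_iff.mp (Finset.mem_range.mp hk)
    rw [show n = (n - k) + k by omega, coeff_Dz_iter]
    have hp : (∏ j ∈ Finset.range k, ((n - k + j : ℕ) : ℂ))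
        = ((Nat.factorial k : ℕ) : ℂ) * ((n - 1).choose k : ℂ) := by
      rw [← Nat.cast_prod]
      norm_cast
      rw [prod_eq_desc n k hkn, Nat.descFactorial_eq_factorial_mul_choose]
    rw [hp]
    have hkf : ((Nat.factorial k : ℕ) : ℂ) ≠ 0 := by
      exact_mod_cast Nat.factorial_ne_zero k
    have h1 : ((-1 : ℂ)) ^ k * (-1) ^ k = 1 := by
      rw [← mul_pow]; simp
    field_simp
    rw [Nat.sub_add_cancel hkn]
    linear_combination (((n - 1).choose k : ℂ) *
      PowerSeries.coeff (n - k) φ) * h1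
  rw [map_sub, h, Finset.sum_range_succ']
  have h2 : ∑ k ∈ Finset.Ico 1 (n + 1), ((n - 1).choose k : ℂ) * PowerSeries.coeff (n - k) φ
      = ∑ i ∈ Finset.range n, ((n - 1).choose (i + 1) : ℂ) * PowerSeries.coeff (n - (i + 1)) φ := by
    rw [Finset.sum_Ico_eq_sum_range]
    simp [add_comm]
  rw [h2]
  simp

/-- solution coefficients for the inverse map -/
def solCoeff (ψ : ℕ → ℂ) : ℕ → ℂ := fun n =>
  if n = 0 then 0 else
    ((n : ℂ))⁻¹ * (ψ (n + 1) -
      ∑ k ∈ (Finset.Ico 2 (n + 2)).attach, (n.choose k.1 : ℂ) * solCoeff ψ (n + 1 - k.1))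
termination_by n => n
decreasing_by
  have := Finset.mem_Ico.mp k.2
  omega

lemma solCoeff_zero (ψ : ℕ → ℂ) : solCoeff ψ 0 = 0 := by
  rw [solCoeff]; simp

lemma solCoeff_spec (ψ : ℕ → ℂ) (n : ℕ) (hn : n ≠ 0) :
    (n : ℂ) * solCoeff ψ n
      = ψ (n + 1) - ∑ k ∈ Finset.Ico 2 (n + 2), (n.choose k : ℂ) * solCoeff ψ (n + 1 - k) := by
  rw [solCoeff]
  simp only [hn, if_false]
  rw [← Finset.sum_attach (Finset.Ico 2 (n + 2)) (fun k => (n.choose k : ℂ) * solCoeff ψ (n + 1 - k))]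
  rw [← mul_assoc, mul_inv_cancel₀ (by exact_mod_cast hn), one_mul]

/-- for `φ ∈ z⁻¹ℂ[[z⁻¹]]`, `(C_{id-1} - Id)φ ∈ z⁻²ℂ[[z⁻¹]]`, and
`C_{id-1} - Id : z⁻¹ℂ[[z⁻¹]] → z⁻²ℂ[[z⁻¹]]` is a bijection. -/
theorem statement2 :
    (∀ φ : PowerSeries ℂ, PowerSeries.coeff 0 φ = 0 →
      PowerSeries.coeff 0 (Cm1 φ - φ) = 0 ∧ PowerSeries.coeff 1 (Cm1 φ - φ) = 0) ∧
    Set.BijOn (fun φ => Cm1 φ - φ)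
      {φ : PowerSeries ℂ | PowerSeries.coeff 0 φ = 0}
      {ψ : PowerSeries ℂ | PowerSeries.coeff 0 ψ = 0 ∧ PowerSeries.coeff 1 ψ = 0} := by
  have hmaps : ∀ φ : PowerSeries ℂ,
      PowerSeries.coeff 0 (Cm1 φ - φ) = 0 ∧ PowerSeries.coeff 1 (Cm1 φ - φ) = 0 := by
    intro φ
    constructor
    · rw [key]; simp
    · rw [key]
      rw [show Finset.Ico 1 2 = {1} from rfl]
      simp
  refine ⟨fun φ _ => hmaps φ, fun φ hφ => ⟨(hmaps φ).1, (hmaps φ).2⟩, ?_, ?_⟩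
  · -- InjOn
    intro φ hφ φ' hφ' heq
    simp only [Set.mem_setOf_eq] at hφ hφ'
    have hc : ∀ n, PowerSeries.coeff n φ = PowerSeries.coeff n φ' := by
      intro n
      induction n using Nat.strong_induction_on with
      | _ n ih =>
        rcases Nat.eq_zero_or_pos n with h0 | hpos
        · rw [h0, hφ, hφ']
        · have he := congrArg (PowerSeries.coeff (n + 1)) heq
          rw [key, key] at he
          have hsplit : ∀ ρ : PowerSeries ℂ,
              ∑ k ∈ Finset.Ico 1 (n + 2), ((n + 1 - 1).choose k : ℂ) * PowerSeries.coeff (n + 1 - k) ρ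
              = (n : ℂ) * PowerSeries.coeff n ρ
                + ∑ k ∈ Finset.Ico 2 (n + 2), (n.choose k : ℂ) * PowerSeries.coeff (n + 1 - k) ρ := by
            intro ρ
            rw [← Finset.sum_Ico_consecutive _ (by omega : 1 ≤ 2) (by omega : 2 ≤ n + 2)]
            congr 1
            rw [show Finset.Ico 1 2 = {1} from rfl]
            simp
          rw [hsplit, hsplit] at he
          have hrest : ∑ k ∈ Finset.Ico 2 (n + 2), (n.choose k : ℂ) * PowerSeries.coeff (n + 1 - k) φ
              = ∑ k ∈ Finset.Ico 2 (n + 2), (n.choose k : ℂ) * PowerSeries.coeff (n + 1 - k) φ' := by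
            refine Finset.sum_congr rfl fun k hk => ?_
            have hk2 := Finset.mem_Ico.mp hk
            rw [ih (n + 1 - k) (by omega)]
          rw [hrest] at he
          have := add_right_cancel he
          exact mul_left_cancel₀ (by exact_mod_cast hpos.ne' : (n : ℂ) ≠ 0) this
    exact PowerSeries.ext hc
  · -- SurjOn
    intro ψ hψ
    obtain ⟨hψ0, hψ1⟩ := hψ
    set a : ℕ → ℂ := solCoeff (fun n => PowerSeries.coeff n ψ) with ha
    refine ⟨PowerSeries.mk a, ?_, ?_⟩
    · simp only [Set.mem_setOf_eq, PowerSeries.coeff_mk]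
      exact solCoeff_zero _
    · ext n
      rw [key]
      match n with
      | 0 => simpa using hψ0.symm
      | 1 =>
        rw [show Finset.Ico 1 2 = {1} from rfl]
        simpa using hψ1.symm
      | (m + 2) =>
        have hsplit :
            ∑ k ∈ Finset.Ico 1 (m + 3), ((m + 2 - 1).choose k : ℂ) * PowerSeries.coeff (m + 2 - k) (PowerSeries.mk a)
            = ((m + 1 : ℕ) : ℂ) * a (m + 1)
              + ∑ k ∈ Finset.Ico 2 (m + 3), ((m + 1).choose k : ℂ) * a (m + 2 - k) := by
          rw [← Finset.sum_Ico_consecutive _ (by omega : 1 ≤ 2) (by omega : 2 ≤ m + 3)]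
          congr 1
          · rw [show Finset.Ico 1 2 = {1} from rfl]
            simp
          · refine Finset.sum_congr rfl fun k hk => ?_
            rw [PowerSeries.coeff_mk]
            norm_num
        rw [hsplit]
        have := solCoeff_spec (fun n => PowerSeries.coeff n ψ) (m + 1) (by omega)
        push_cast at this ⊢
        rw [show ((m : ℕ) + 1 + 1 : ℕ) = m + 2 from rfl] at this
        linear_combination this

end
end

section
/- Let R > 0 and δ ∈ (0,π/2), and let h : 𝒫⁺_{R,δ} → ℂ be holomorphic and injective, satisfying h(z+1) = h(z) + 1 for every z ∈ 𝒫⁺_{R,δ} such that z+1 ∈ 𝒫⁺_{R,δ}. Then there exists c ∈ ℂ such that h(z) = z + c for all z ∈ 𝒫⁺_{R,δ}. -/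
open Finset
open scoped Real

open Complex Metric Set Filter Bornology
open scoped Topology

noncomputable section

/-- The sector `𝒫⁺_{R,δ} = {r e^{iθ} : r > R, -π/2-δ < θ < π/2+δ}`. -/
def Pp (R δ : ℝ) : Set ℂ := {z : ℂ | R < ‖z‖ ∧ |Complex.arg z| < Real.pi / 2 + δ}

/-- The sector `𝒫⁻_{R,δ} = {r e^{iθ} : r > R, π/2-δ < θ < 3π/2+δ}`. -/
def Pm (R δ : ℝ) : Set ℂ := {z : ℂ | -z ∈ Pp R δ}

lemma csq (z : ℂ) : ‖z‖^2 = z.re^2 + z.im^2 := by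
  rw [Complex.sq_norm, Complex.normSq_apply]; ring

lemma mem_Pp_iff {R δ : ℝ} (hR : 0 < R) (hδ0 : 0 < δ) (hδ : δ < Real.pi/2) {z : ℂ} :
    z ∈ Pp R δ ↔ R < ‖z‖ ∧ -Real.sin δ * ‖z‖ < z.re := by
  have hπ := Real.pi_pos
  by_cases hz0 : z = 0
  · subst hz0
    simp only [Pp, Set.mem_setOf_eq, norm_zero]
    constructor
    · rintro ⟨h1, -⟩; exact absurd h1 (by linarith)
    · rintro ⟨h1, -⟩; exact absurd h1 (by linarith)
  · have hmem1 : |Complex.arg z| ∈ Set.Icc 0 Real.pi :=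
      ⟨abs_nonneg _, Complex.abs_arg_le_pi z⟩
    have hmem2 : Real.pi/2 + δ ∈ Set.Icc 0 Real.pi := ⟨by linarith, by linarith⟩
    have key : |Complex.arg z| < Real.pi/2 + δ ↔
        Real.cos (Real.pi/2 + δ) < Real.cos |Complex.arg z| :=
      (Real.strictAntiOn_cos.lt_iff_gt hmem2 hmem1).symm
    have hn : 0 < ‖z‖ := norm_pos_iff.mpr hz0
    have hcos2 : Real.cos |Complex.arg z| = z.re / ‖z‖ := by
      rw [Real.cos_abs, Complex.cos_arg hz0]
    have hcpd : Real.cos (Real.pi/2 + δ) = -Real.sin δ := by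
      rw [add_comm]; exact Real.cos_add_pi_div_two δ
    simp only [Pp, Set.mem_setOf_eq]
    rw [key, hcos2, hcpd, lt_div_iff₀ hn]

lemma isOpen_Pp {R δ : ℝ} (hR : 0 < R) (hδ0 : 0 < δ) (hδ : δ < Real.pi/2) :
    IsOpen (Pp R δ) := by
  have : Pp R δ = {z : ℂ | R < ‖z‖} ∩ {z : ℂ | -Real.sin δ * ‖z‖ < z.re} := by
    ext z; rw [mem_Pp_iff hR hδ0 hδ]; rfl
  rw [this]
  exact (isOpen_lt continuous_const continuous_norm).inter
    (isOpen_lt (continuous_const.mul continuous_norm) Complex.continuous_re)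

lemma preconnected_Pp {R δ : ℝ} (hR : 0 < R) (hδ0 : 0 < δ) (hδ : δ < Real.pi/2) :
    IsPreconnected (Pp R δ) := by
  have hπ := Real.pi_pos
  have hmap : Pp R δ =
      (fun p : ℝ × ℝ => (p.1 : ℂ) * Complex.exp (p.2 * Complex.I)) ''
        (Set.Ioi R ×ˢ Set.Ioo (-(Real.pi/2+δ)) (Real.pi/2+δ)) := by
    ext z
    constructor
    · rintro ⟨h1, h2⟩
      rcases abs_lt.mp h2 with ⟨hlo, hhi⟩
      refine ⟨(‖z‖, Complex.arg z), ⟨h1, hlo, hhi⟩, ?_⟩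
      simpa using Complex.norm_mul_exp_arg_mul_I z
    · rintro ⟨⟨r, θ⟩, ⟨hr, hθ1, hθ2⟩, rfl⟩
      simp only [Set.mem_Ioi, Set.mem_Ioo] at hr hθ1 hθ2
      have hr0 : 0 < r := lt_trans hR hr
      have hnorm : ‖(r:ℂ) * Complex.exp ((θ:ℂ) * Complex.I)‖ = r := by
        rw [norm_mul,
          Complex.norm_exp_ofReal_mul_I, Complex.norm_real, Real.norm_eq_abs, abs_of_pos hr0, mul_one]
      have harg : Complex.arg ((r:ℂ) * Complex.exp ((θ:ℂ) * Complex.I)) = θ := by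
        rw [Complex.arg_real_mul _ hr0, Complex.exp_mul_I]
        exact Complex.arg_cos_add_sin_mul_I (θ := θ) ⟨by linarith, by linarith⟩
      refine ⟨by rw [hnorm]; exact hr, ?_⟩
      rw [harg, abs_lt]
      exact ⟨by linarith, hθ2⟩
  rw [hmap]
  apply IsPreconnected.image
  · exact ((convex_Ioi R).prod (convex_Ioo _ _)).isPreconnected
  · apply Continuous.continuousOn
    exact (Complex.continuous_ofReal.comp continuous_fst).mul
      (Complex.continuous_exp.comp
        ((Complex.continuous_ofReal.comp continuous_snd).mul continuous_const))

/-- The "absorbing" subset of the sector, closed under adding 1. -/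
def Ssec (R δ : ℝ) : Set ℂ := {z | z ∈ Pp R δ ∧ (0 ≤ z.re ∨ R < |z.im|)}

lemma Ssec_subset_Pp {R δ : ℝ} : Ssec R δ ⊆ Pp R δ := fun _ hz => hz.1

lemma Ssec_step {R δ : ℝ} (hR : 0 < R) (hδ0 : 0 < δ) (hδ : δ < Real.pi/2) {z : ℂ}
    (hz : z ∈ Ssec R δ) : z + 1 ∈ Ssec R δ := by
  obtain ⟨hPp, hS⟩ := hz
  rw [mem_Pp_iff hR hδ0 hδ] at hPp
  obtain ⟨h1, h2⟩ := hPp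
  have hπ := Real.pi_pos
  have hs0 : 0 < Real.sin δ := Real.sin_pos_of_pos_of_lt_pi hδ0 (by linarith)
  have hs1 : Real.sin δ ≤ 1 := Real.sin_le_one δ
  have hre : (z+1).re = z.re + 1 := by simp
  have him : (z+1).im = z.im := by simp
  have hsq := csq z
  have hsq1 := csq (z+1)
  rw [hre, him] at hsq1
  have hnn := norm_nonneg z
  have hnn1 := norm_nonneg (z+1)
  constructor
  · rw [mem_Pp_iff hR hδ0 hδ]
    rcases hS with hre0 | him0
    · have hmono : ‖z‖ ≤ ‖z+1‖ := by nlinarith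
      exact ⟨by linarith, by nlinarith⟩
    · have himle : |z.im| ≤ ‖z+1‖ := by
        have := Complex.abs_im_le_norm (z+1)
        rw [← him]; exact this
      have htri : ‖z‖ - 1 ≤ ‖z+1‖ := by
        have := norm_add_le (z+1) (-1)
        simp only [add_neg_cancel_right, norm_neg, norm_one] at this
        linarith
      refine ⟨by linarith, ?_⟩
      rw [hre]
      nlinarith
  · rcases hS with hre0 | him0
    · left; rw [hre]; linarith
    · right; rw [him]; exact him0

lemma Ssec_add_nat {R δ : ℝ} (hR : 0 < R) (hδ0 : 0 < δ) (hδ : δ < Real.pi/2) {z : ℂ}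
    (hz : z ∈ Ssec R δ) : ∀ n : ℕ, z + n ∈ Ssec R δ := by
  intro n
  induction n with
  | zero => simpa using hz
  | succ m ih =>
    have : z + ((m+1 : ℕ) : ℂ) = (z + m) + 1 := by push_cast; ring
    rw [this]
    exact Ssec_step hR hδ0 hδ ih

lemma mem_Ssec_of_lt_re {R δ : ℝ} (hR : 0 < R) (hδ0 : 0 < δ) (hδ : δ < Real.pi/2) {z : ℂ}
    (hz : R < z.re) : z ∈ Ssec R δ := by
  have hπ := Real.pi_pos
  have hs0 : 0 < Real.sin δ := Real.sin_pos_of_pos_of_lt_pi hδ0 (by linarith)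
  have hre : z.re ≤ ‖z‖ := by
    have := Complex.re_le_norm z
    exact this
  have hnn := norm_nonneg z
  refine ⟨(mem_Pp_iff hR hδ0 hδ).mpr ⟨by linarith, by nlinarith⟩, Or.inl (by linarith)⟩

lemma absorb {R δ : ℝ} (hR : 0 < R) (hδ0 : 0 < δ) (hδ : δ < Real.pi/2) (z : ℂ) (n : ℕ)
    (hn : ‖z‖ + R + 1 ≤ (n : ℝ)) : z + n ∈ Ssec R δ := by
  apply mem_Ssec_of_lt_re hR hδ0 hδ
  have hre : (z + n).re = z.re + n := by simp
  have h1 : -‖z‖ ≤ z.re := by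
    have := Complex.abs_re_le_norm z
    cases abs_le.mp this; linarith
  rw [hre]; linarith


/-- helper -/
lemma two_le_inv_norm {w : ℂ} (hw0 : w ≠ 0) (hw : ‖w‖ < 1/2) : (2:ℝ) ≤ ‖w⁻¹‖ := by
  rw [norm_inv]
  have hpos : 0 < ‖w‖ := norm_pos_iff.mpr hw0
  rw [le_inv_comm₀ two_pos hpos]
  linarith

/-- An entire injective function satisfying `H(z+1) = H(z)+1` is a translation. -/
lemma entire_translation (H : ℂ → ℂ) (Hd : Differentiable ℂ H)
    (Hinj : Function.Injective H) (Hper : ∀ z, H (z + 1) = H z + 1) :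
    ∃ c : ℂ, ∀ z, H z = z + c := by
  set G : ℂ → ℂ := fun z => H z - z with hGdef
  have Gd : Differentiable ℂ G := Hd.sub differentiable_id
  have Gper : ∀ z, G (z + 1) = G z := by
    intro z; simp only [hGdef, Hper z]; ring
  have Gnat : ∀ (n : ℕ) (z : ℂ), G (z + n) = G z := by
    intro n
    induction n with
    | zero => simp
    | succ m ih =>
      intro z
      have : z + (m + 1 : ℕ) = (z + m) + 1 := by push_cast; ring
      rw [this, Gper, ih]
  have Gnatval : ∀ n : ℕ, G (n : ℂ) = G 0 := by
    intro n; simpa using Gnat n 0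
  -- it suffices to show G is bounded
  suffices hb : ∃ C, ∀ z, ‖G z‖ ≤ C by
    obtain ⟨C, hC⟩ := hb
    refine ⟨H 0 - 0, fun z => ?_⟩
    have hrange : IsBounded (range G) := by
      rw [isBounded_iff_forall_norm_le]
      exact ⟨C, by rintro x ⟨z, rfl⟩; exact hC z⟩
    have := Gd.apply_eq_apply_of_bounded hrange z 0
    simp only [hGdef] at this
    linear_combination this
  -- growth of H along the naturals
  have Hgrow : ∀ C : ℝ, ¬ ∀ᶠ (n : ℕ) in atTop, ‖H (n : ℂ)‖ ≤ C := by
    intro C hC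
    obtain ⟨N, hN⟩ := eventually_atTop.mp hC
    obtain ⟨n, hn⟩ := exists_nat_gt (|C| + ‖G 0‖ + N)
    have h1 : ‖H (n : ℂ)‖ ≤ C := hN n (by
      have : (N : ℝ) ≤ n := by
        have h := hn
        have := abs_nonneg C; have := norm_nonneg (G 0)
        linarith
      exact_mod_cast this)
    have h2 : (n : ℝ) ≤ ‖H (n : ℂ)‖ + ‖G 0‖ := by
      have : (n : ℂ) = H (n : ℂ) - G (n : ℂ) := by simp [hGdef]
      calc (n : ℝ) = ‖(n : ℂ)‖ := by simp
        _ = ‖H (n : ℂ) - G (n : ℂ)‖ := by rw [← this]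
        _ ≤ ‖H (n : ℂ)‖ + ‖G (n : ℂ)‖ := norm_sub_le _ _
        _ = ‖H (n : ℂ)‖ + ‖G 0‖ := by rw [Gnatval]
    have hN0 : (0 : ℝ) ≤ N := Nat.cast_nonneg N
    have : C ≤ |C| := le_abs_self C
    linarith
  -- open mapping theorem: a ball around `H 0` inside the image of `ball 0 1`
  have hA : AnalyticAt ℂ H 0 := Hd.differentiableOn.analyticAt univ_mem
  rcases hA.eventually_constant_or_nhds_le_map_nhds with hc | hm
  · exfalso
    have h2 : ∀ᶠ z in 𝓝[≠] (0 : ℂ), H z = H 0 :=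
      hc.filter_mono nhdsWithin_le_nhds
    obtain ⟨z, hz1, hz2⟩ := (h2.and self_mem_nhdsWithin).exists
    exact hz2 (Hinj hz1)
  set a := H 0 with ha
  have himg : H '' (ball 0 1) ∈ 𝓝 a := hm (image_mem_map (ball_mem_nhds _ one_pos))
  obtain ⟨ε, hε, hball⟩ := Metric.mem_nhds_iff.mp himg
  -- separation: for ‖z‖ ≥ 2, H z stays away from a
  have hsep : ∀ z : ℂ, 2 ≤ ‖z‖ → ε ≤ ‖H z - a‖ := by
    intro z hz
    by_contra hlt
    push_neg at hlt
    have : H z ∈ ball a ε := by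
      rw [mem_ball, dist_eq_norm]; exact hlt
    obtain ⟨w, hw, hww⟩ := hball this
    have : w = z := Hinj hww
    rw [this] at hw
    simp only [mem_ball, dist_zero_right] at hw
    linarith
  -- the auxiliary function near infinity
  set k : ℂ → ℂ := fun w => (H w⁻¹ - a)⁻¹ with hkdef
  have hk_ne : ∀ w : ℂ, w ≠ 0 → ‖w‖ < 1/2 → H w⁻¹ - a ≠ 0 := by
    intro w hw0 hw
    have h2 : (2 : ℝ) ≤ ‖w⁻¹‖ := two_le_inv_norm hw0 hw
    intro hcon
    have := hsep _ h2
    rw [hcon] at this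
    simp at this
    linarith
  have kdiff : DifferentiableOn ℂ k (ball 0 (1/2) \ {0}) := by
    intro w hw
    obtain ⟨hw1, hw2⟩ := hw
    simp only [mem_ball, dist_zero_right] at hw1
    have hw0 : w ≠ 0 := by simpa using hw2
    apply DifferentiableAt.differentiableWithinAt
    exact ((Hd.differentiableAt.comp w (differentiableAt_inv hw0)).sub_const a).inv
      (hk_ne w hw0 hw1)
  have kbdd : BddAbove (norm ∘ k '' (ball 0 (1/2) \ {0})) := by
    refine ⟨ε⁻¹, ?_⟩
    rintro x ⟨w, ⟨hw1, hw2⟩, rfl⟩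
    simp only [mem_ball, dist_zero_right] at hw1
    have hw0 : w ≠ 0 := by simpa using hw2
    have h2 : (2 : ℝ) ≤ ‖w⁻¹‖ := two_le_inv_norm hw0 hw1
    simp only [Function.comp_apply, hkdef, norm_inv]
    exact inv_anti₀ hε (hsep _ h2)
  set k' : ℂ → ℂ := Function.update k 0 (limUnder (𝓝[≠] 0) k) with hk'def
  have k'diff : DifferentiableOn ℂ k' (ball 0 (1/2)) :=
    Complex.differentiableOn_update_limUnder_of_bddAbove
      (ball_mem_nhds _ (by norm_num)) kdiff kbdd
  have k'eq : ∀ w : ℂ, w ≠ 0 → k' w = k w := fun w hw => Function.update_of_ne hw _ _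
  -- the key identity: for ‖z‖ > 2, H z = a + (k' z⁻¹)⁻¹
  have k'ne : ∀ w : ℂ, w ≠ 0 → ‖w‖ < 1/2 → k' w ≠ 0 := by
    intro w hw0 hw
    rw [k'eq w hw0, hkdef]
    exact inv_ne_zero (hk_ne w hw0 hw)
  have keyid : ∀ z : ℂ, 2 < ‖z‖ → H z = a + (k' z⁻¹)⁻¹ := by
    intro z hz
    have hz0 : z ≠ 0 := by
      intro hzz; rw [hzz] at hz; simp at hz; linarith
    have hzi0 : z⁻¹ ≠ 0 := inv_ne_zero hz0
    have hzi : ‖z⁻¹‖ < 1/2 := by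
      rw [norm_inv]
      rw [inv_lt_comm₀ (norm_pos_iff.mpr hz0) (by norm_num : (0:ℝ) < 1/2)]
      linarith
    rw [k'eq _ hzi0, hkdef]
    simp only [inv_inv]
    ring
  -- limit of 1/n in ℂ
  have t1 : Filter.Tendsto (fun n : ℕ => ((n:ℂ))⁻¹) atTop (𝓝 0) := by
    have hr : Filter.Tendsto (fun n : ℕ => ((n:ℝ))⁻¹) atTop (𝓝 0) :=
      tendsto_inv_atTop_zero.comp tendsto_natCast_atTop_atTop
    have := (Complex.continuous_ofReal.tendsto 0).comp hr
    simp only [Function.comp_def, Complex.ofReal_inv, Complex.ofReal_natCast] at this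
    simpa using this
  have k'cont : ContinuousAt k' 0 :=
    (k'diff.differentiableAt (ball_mem_nhds _ (by norm_num))).continuousAt
  have natform : ∀ n : ℕ, 3 ≤ n → H (n:ℂ) = a + (k' ((n:ℂ)⁻¹))⁻¹ := by
    intro n hn
    apply keyid
    have h3 : (3:ℝ) ≤ (n:ℝ) := by exact_mod_cast hn
    rw [Complex.norm_natCast]
    linarith
  have hGa : ∀ n : ℕ, H (n:ℂ) = (n:ℂ) + G 0 := by
    intro n
    have := Gnatval n
    simp only [hGdef] at this
    linear_combination this
  -- Step A : k' 0 = 0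
  have hk'0 : k' 0 = 0 := by
    by_contra hc0
    have t2 : Filter.Tendsto (fun n : ℕ => k' ((n:ℂ)⁻¹)) atTop (𝓝 (k' 0)) :=
      k'cont.tendsto.comp t1
    have t3 : Filter.Tendsto (fun n : ℕ => (k' ((n:ℂ)⁻¹))⁻¹) atTop (𝓝 ((k' 0)⁻¹)) :=
      t2.inv₀ hc0
    have t4 : Filter.Tendsto (fun n : ℕ => H (n:ℂ)) atTop (𝓝 (a + (k' 0)⁻¹)) := by
      apply Filter.Tendsto.congr' ?_ (tendsto_const_nhds.add t3)
      filter_upwards [eventually_ge_atTop 3] with n hn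
      exact (natform n hn).symm
    have t5 : ∀ᶠ n : ℕ in atTop, ‖H (n:ℂ)‖ ≤ ‖a + (k' 0)⁻¹‖ + 1 := by
      have := t4.norm
      exact this.eventually (eventually_le_nhds (lt_add_one _))
    exact Hgrow _ t5
  -- the dslope function d
  set d : ℂ → ℂ := dslope k' 0 with hddef
  have ddiff : DifferentiableOn ℂ d (ball 0 (1/2)) :=
    (Complex.differentiableOn_dslope (ball_mem_nhds _ (by norm_num))).mpr k'diff
  have dcont : ContinuousAt d 0 :=
    (ddiff.differentiableAt (ball_mem_nhds _ (by norm_num))).continuousAt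
  have k'wd : ∀ w : ℂ, k' w = w * d w := by
    intro w
    rcases eq_or_ne w 0 with rfl | hw
    · simp [hk'0]
    · rw [hddef, dslope_of_ne _ hw, slope_def_field, hk'0]
      field_simp
      ring
  -- Step B : d 0 = 1
  have hd0 : d 0 = 1 := by
    have ev : ∀ᶠ n : ℕ in atTop, d ((n:ℂ)⁻¹) = (1 + (G 0 - a) * (n:ℂ)⁻¹)⁻¹ := by
      filter_upwards [eventually_ge_atTop 3, eventually_gt_atTop ⌈‖a - G 0‖⌉₊] with n h3 hbig
      have hn0 : (n:ℂ) ≠ 0 := by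
        simp only [ne_eq, Nat.cast_eq_zero]; omega
      have hw0 : ((n:ℂ))⁻¹ ≠ 0 := inv_ne_zero hn0
      have hne : (n:ℂ) + (G 0 - a) ≠ 0 := by
        intro hcon
        have h1 : (n:ℂ) = -(G 0 - a) := by linear_combination hcon
        have h2 : (n:ℝ) = ‖a - G 0‖ := by
          have := congrArg norm h1
          simpa using this
        have h3' : ‖a - G 0‖ ≤ (⌈‖a - G 0‖⌉₊ : ℝ) := Nat.le_ceil _
        have h4 : ((⌈‖a - G 0‖⌉₊ : ℕ) : ℝ) < (n:ℝ) := by exact_mod_cast hbig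
        linarith
      have e1 : (k' ((n:ℂ)⁻¹))⁻¹ = (n:ℂ) + (G 0 - a) := by
        have h := natform n h3
        rw [hGa n] at h
        linear_combination -h
      have e2 : k' ((n:ℂ)⁻¹) = ((n:ℂ) + (G 0 - a))⁻¹ := by
        rw [← e1, inv_inv]
      have e3 : d ((n:ℂ)⁻¹) = k' ((n:ℂ)⁻¹) * (n:ℂ) := by
        have hh := k'wd ((n:ℂ)⁻¹)
        rw [hh]
        rw [mul_comm ((n:ℂ)⁻¹) (d ((n:ℂ)⁻¹)), mul_assoc, inv_mul_cancel₀ hn0, mul_one]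
      rw [e3, e2]
      have hrw : (1 + (G 0 - a) * ((n:ℂ))⁻¹) = ((n:ℂ) + (G 0 - a)) * ((n:ℂ))⁻¹ := by
        field_simp
      rw [hrw, mul_inv, inv_inv]
    have lim1 : Filter.Tendsto (fun n:ℕ => (1 + (G 0 - a) * (n:ℂ)⁻¹)⁻¹) atTop (𝓝 1) := by
      have hbase : Filter.Tendsto (fun n:ℕ => 1 + (G 0 - a) * (n:ℂ)⁻¹) atTop (𝓝 1) := by
        have h1 : Filter.Tendsto (fun n:ℕ => (G 0 - a) * ((n:ℂ))⁻¹) atTop (𝓝 0) := by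
          simpa using t1.const_mul (G 0 - a)
        simpa using Filter.Tendsto.const_add (1:ℂ) h1
      have := hbase.inv₀ one_ne_zero
      simpa using this
    have lim2 : Filter.Tendsto (fun n:ℕ => d ((n:ℂ)⁻¹)) atTop (𝓝 (d 0)) :=
      dcont.tendsto.comp t1
    have evs : (fun n:ℕ => (1 + (G 0 - a) * (n:ℂ)⁻¹)⁻¹) =ᶠ[atTop] (fun n:ℕ => d ((n:ℂ)⁻¹)) := by
      filter_upwards [ev] with n hn using hn.symm
    exact tendsto_nhds_unique lim2 (Filter.Tendsto.congr' evs lim1)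
  -- Step C : the second dslope and the bound at infinity
  set e : ℂ → ℂ := dslope d 0 with hedef
  have ediff : DifferentiableOn ℂ e (ball 0 (1/2)) :=
    (Complex.differentiableOn_dslope (ball_mem_nhds _ (by norm_num))).mpr ddiff
  have econt : ContinuousAt e 0 :=
    (ediff.differentiableAt (ball_mem_nhds _ (by norm_num))).continuousAt
  have dwd : ∀ w : ℂ, d w = 1 + w * e w := by
    intro w
    rcases eq_or_ne w 0 with rfl | hw
    · simp [hd0]
    · rw [hedef, dslope_of_ne _ hw, slope_def_field, hd0]
      field_simp
      ring
  have evb : ∀ᶠ w in 𝓝 (0:ℂ), ‖e w‖ ≤ ‖e 0‖ + 1 ∧ 1/2 ≤ ‖d w‖ := by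
    apply Filter.Eventually.and
    · exact econt.norm.eventually (eventually_le_nhds (lt_add_one _))
    · have h1 : (1/2 : ℝ) < ‖d 0‖ := by rw [hd0]; norm_num
      exact (dcont.norm.eventually (eventually_gt_nhds h1)).mono fun w hw => hw.le
  obtain ⟨r, hr0, hrball⟩ := Metric.eventually_nhds_iff_ball.mp evb
  set r' : ℝ := min r (1/4) with hr'def
  have hr'0 : 0 < r' := lt_min hr0 (by norm_num)
  have hr'half : r' ≤ 1/4 := min_le_right _ _
  -- bound for G outside a large ball
  have boundout : ∀ z : ℂ, r'⁻¹ < ‖z‖ → ‖G z‖ ≤ ‖a‖ + 2*(‖e 0‖+1) := by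
    intro z hz
    have h4r : (4:ℝ) ≤ r'⁻¹ := by
      rw [le_inv_comm₀ (by norm_num : (0:ℝ) < 4) hr'0]
      linarith
    have hz2 : 2 < ‖z‖ := by linarith
    have hz0 : z ≠ 0 := by
      intro hzz; rw [hzz] at hz2; simp at hz2; linarith
    set w : ℂ := z⁻¹ with hwdef
    have hw0 : w ≠ 0 := inv_ne_zero hz0
    have hwr : ‖w‖ < r' := by
      rw [hwdef, norm_inv]
      rw [inv_lt_comm₀ (norm_pos_iff.mpr hz0) hr'0]
      linarith
    have hwball : w ∈ ball (0:ℂ) r := by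
      simp only [mem_ball, dist_zero_right]
      exact lt_of_lt_of_le hwr (min_le_left _ _)
    obtain ⟨hew, hdw⟩ := hrball _ hwball
    have hdw0 : d w ≠ 0 := by
      intro hcon; rw [hcon] at hdw; simp at hdw; linarith
    have hkey := keyid z hz2
    have hkeyw : H z = a + (k' w)⁻¹ := by rw [hwdef]; exact hkey
    have hzw : z = w⁻¹ := by rw [hwdef, inv_inv]
    have hzwne : z * w = 1 := by rw [hwdef]; exact mul_inv_cancel₀ hz0
    have hGz : G z = a - e w / d w := by
      have hkw : k' w = w * d w := k'wd w
      have hdww : d w = 1 + w * e w := dwd w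
      have e4 : (w * d w)⁻¹ = z * (d w)⁻¹ := by rw [mul_inv, ← hzw]
      have e5 : z * (d w)⁻¹ - z = -(e w / d w) := by
        field_simp
        linear_combination (-z) * hdww + (-(e w)) * hzwne
      simp only [hGdef]
      rw [hkeyw, hkw, e4]
      linear_combination e5
    rw [hGz]
    calc ‖a - e w / d w‖ ≤ ‖a‖ + ‖e w / d w‖ := norm_sub_le _ _
      _ = ‖a‖ + ‖e w‖ / ‖d w‖ := by rw [norm_div]
      _ ≤ ‖a‖ + (‖e 0‖ + 1) / (1/2) := by
          have hnum : (0:ℝ) ≤ ‖e 0‖ + 1 := by linarith [norm_nonneg (e 0)]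
          have hdd : ‖e w‖ / ‖d w‖ ≤ (‖e 0‖ + 1) / (1/2) :=
            div_le_div₀ hnum hew (by norm_num) hdw
          linarith
      _ = ‖a‖ + 2*(‖e 0‖+1) := by ring
  -- conclude : G is bounded
  obtain ⟨C1, hC1⟩ := (isCompact_closedBall (0:ℂ) (r'⁻¹ + 1)).exists_bound_of_continuousOn
    Gd.continuous.continuousOn
  refine ⟨max C1 (‖a‖ + 2*(‖e 0‖+1)), fun z => ?_⟩
  rcases le_or_gt ‖z‖ (r'⁻¹ + 1) with hle | hgt
  · exact le_trans (hC1 z (by simpa [mem_closedBall, dist_zero_right] using hle)) (le_max_left _ _)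
  · exact le_trans (boundout z (by linarith)) (le_max_right _ _)


lemma h_shift {R δ : ℝ} (hR : 0 < R) (hδ0 : 0 < δ) (hδ : δ < Real.pi/2)
    (h : ℂ → ℂ) (per : ∀ z ∈ Pp R δ, z + 1 ∈ Pp R δ → h (z + 1) = h z + 1) :
    ∀ (n : ℕ) (z : ℂ), z ∈ Ssec R δ → h (z + n) = h z + n := by
  intro n
  induction n with
  | zero => intro z _; simp
  | succ m ih =>
    intro z hz
    have hzm : z + m ∈ Ssec R δ := Ssec_add_nat hR hδ0 hδ hz m
    have hstep : (z + m) + 1 ∈ Pp R δ := (Ssec_step hR hδ0 hδ hzm).1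
    have e1 : z + ((m+1:ℕ):ℂ) = (z + m) + 1 := by push_cast; ring
    rw [e1, per _ hzm.1 hstep, ih z hz]
    push_cast; ring



/-- a holomorphic injective map `h` on `𝒫⁺_{R,δ}` satisfying
`h(z+1) = h(z) + 1` (whenever `z` and `z+1` are both in the sector) is a
translation: `h = id + c`. -/
theorem statement15 (R δ : ℝ) (hR : 0 < R) (hδ0 : 0 < δ) (hδ : δ < Real.pi / 2)
    (h : ℂ → ℂ) (hol : DifferentiableOn ℂ h (Pp R δ))
    (inj : Set.InjOn h (Pp R δ))
    (per : ∀ z ∈ Pp R δ, z + 1 ∈ Pp R δ → h (z + 1) = h z + 1) :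
    ∃ c : ℂ, ∀ z ∈ Pp R δ, h z = z + c := by
  classical
  set N : ℂ → ℕ := fun z => ⌈‖z‖ + R + 1⌉₊ with hN
  have hNspec : ∀ z : ℂ, ‖z‖ + R + 1 ≤ (N z : ℝ) := fun z => Nat.le_ceil _
  set H : ℂ → ℂ := fun z => h (z + N z) - N z with hH
  have hb : ∀ (z : ℂ) (p q : ℕ), ‖z‖ + R + 1 ≤ (p:ℝ) → p ≤ q →
      h (z + q) - (q:ℂ) = h (z + p) - (p:ℂ) := by
    intro z p q hp hpq
    obtain ⟨m, rfl⟩ := Nat.exists_eq_add_of_le hpq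
    have hzp : z + p ∈ Ssec R δ := absorb hR hδ0 hδ z p hp
    have hsh := h_shift hR hδ0 hδ h per m (z + p) hzp
    have e1 : z + ((p + m : ℕ) : ℂ) = (z + p) + (m:ℕ) := by push_cast; ring
    rw [e1, hsh]
    push_cast; ring
  have Hspec : ∀ (z : ℂ) (n : ℕ), ‖z‖ + R + 1 ≤ (n:ℝ) → H z = h (z + n) - (n:ℂ) := by
    intro z n hn
    rcases le_total n (N z) with hle | hle
    · exact hb z n (N z) hn hle
    · exact (hb z (N z) n (hNspec z) hle).symm
  have HS : ∀ z ∈ Ssec R δ, H z = h z := by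
    intro z hz
    have hsh := h_shift hR hδ0 hδ h per (N z) z hz
    simp only [hH]
    rw [hsh]; ring
  have hPpopen := isOpen_Pp hR hδ0 hδ
  have Hd : Differentiable ℂ H := by
    intro z₀
    have hkey : ∀ z ∈ ball z₀ 1, H z = h (z + ((N z₀ + 1 : ℕ):ℂ)) - ((N z₀ + 1 : ℕ) : ℂ) := by
      intro z hz
      apply Hspec
      have hd : ‖z - z₀‖ < 1 := by rwa [mem_ball, dist_eq_norm] at hz
      have hzb : ‖z‖ ≤ ‖z₀‖ + 1 := by
        have := norm_sub_norm_le z z₀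
        linarith
      push_cast
      linarith [hNspec z₀]
    have hmem : z₀ + ((N z₀ + 1 : ℕ) : ℂ) ∈ Pp R δ := by
      apply Ssec_subset_Pp
      apply absorb hR hδ0 hδ
      push_cast
      linarith [hNspec z₀]
    have hdiff : DifferentiableAt ℂ
        (fun z => h (z + ((N z₀ + 1:ℕ):ℂ)) - ((N z₀ + 1:ℕ):ℂ)) z₀ := by
      apply DifferentiableAt.sub_const
      have hha : DifferentiableAt ℂ h (z₀ + ((N z₀ + 1:ℕ):ℂ)) :=
        hol.differentiableAt (hPpopen.mem_nhds hmem)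
      exact hha.comp z₀ (differentiableAt_id.add_const _)
    have hev : H =ᶠ[𝓝 z₀] fun z => h (z + ((N z₀ + 1:ℕ):ℂ)) - ((N z₀ + 1:ℕ):ℂ) :=
      Filter.eventuallyEq_of_mem (ball_mem_nhds z₀ one_pos) hkey
    exact hdiff.congr_of_eventuallyEq hev
  have Hinj : Function.Injective H := by
    intro z₁ z₂ he
    set n : ℕ := ⌈‖z₁‖ + ‖z₂‖ + R + 1⌉₊ with hn
    have hn1 : ‖z₁‖ + R + 1 ≤ (n:ℝ) :=
      le_trans (by linarith [norm_nonneg z₂]) (Nat.le_ceil _)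
    have hn2 : ‖z₂‖ + R + 1 ≤ (n:ℝ) :=
      le_trans (by linarith [norm_nonneg z₁]) (Nat.le_ceil _)
    rw [Hspec z₁ n hn1, Hspec z₂ n hn2] at he
    have heq : h (z₁ + n) = h (z₂ + n) := by linear_combination he
    have := inj (Ssec_subset_Pp (absorb hR hδ0 hδ z₁ n hn1))
      (Ssec_subset_Pp (absorb hR hδ0 hδ z₂ n hn2)) heq
    exact add_right_cancel this
  have Hper : ∀ z, H (z + 1) = H z + 1 := by
    intro z
    set n : ℕ := ⌈‖z‖ + R + 2⌉₊ with hn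
    have hnn : ‖z‖ + R + 2 ≤ (n:ℝ) := Nat.le_ceil _
    have e1 : H (z+1) = h ((z+1) + (n:ℂ)) - (n:ℂ) := by
      apply Hspec
      have : ‖z+1‖ ≤ ‖z‖ + 1 := by
        have := norm_add_le z 1
        simpa using this
      linarith
    have e2 : H z = h (z + ((n+1:ℕ):ℂ)) - ((n+1:ℕ):ℂ) := by
      apply Hspec
      push_cast
      linarith
    rw [e1, e2]
    have e3 : (z+1) + (n:ℂ) = z + ((n+1:ℕ):ℂ) := by push_cast; ring
    rw [e3]
    push_cast
    ring
  obtain ⟨c, key⟩ := entire_translation H Hd Hinj Hper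
  refine ⟨c, ?_⟩
  have hanal_h : AnalyticOnNhd ℂ h (Pp R δ) := hol.analyticOnNhd hPpopen
  have hanal_g : AnalyticOnNhd ℂ (fun z => z + c) (Pp R δ) :=
    (differentiable_id.add_const c).differentiableOn.analyticOnNhd hPpopen
  set z₀ : ℂ := ((R + 1 : ℝ) : ℂ) with hz₀def
  have hz₀re : z₀.re = R + 1 := by simp [hz₀def]
  have hz₀S : z₀ ∈ Ssec R δ := mem_Ssec_of_lt_re hR hδ0 hδ (by rw [hz₀re]; linarith)
  have hz₀ : z₀ ∈ Pp R δ := Ssec_subset_Pp hz₀S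
  have hV : {z : ℂ | R < z.re} ∈ 𝓝 z₀ :=
    (isOpen_lt continuous_const Complex.continuous_re).mem_nhds (by rw [Set.mem_setOf_eq, hz₀re]; linarith)
  have hev : h =ᶠ[𝓝 z₀] (fun z => z + c) := by
    filter_upwards [hV] with z hz
    have hzS : z ∈ Ssec R δ := mem_Ssec_of_lt_re hR hδ0 hδ hz
    rw [← HS z hzS, key z]
  have heq := hanal_h.eqOn_of_preconnected_of_eventuallyEq hanal_g
    (preconnected_Pp hR hδ0 hδ) hz₀ hev
  exact fun z hz => heq hz
end
end
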